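/- If X and X̄ are selected independently and uniformly at random from the type class T_P of an n-type P on a finite alphabet X, and Y is generated from X via n independent uses of a channel W from X to a finite alphabet Y, then for every γ > 0, the probability that the empirical mutual information between X̄ and Y exceeds γ is at most (n+1)^(|X|+|X||Y|) · exp(-nγ) (exp base 2). -/

import Mathlib

open Finset

/-- Empirical distribution (type) of a sequence. -/
noncomputable def empDist {X : Type*} [DecidableEq X] {n : ℕ} (x : Fin n → X) (a : X) : ℝ :=
  ((Finset.univ.filter fun i => x i = a).card : ℝ) / n

/-- Empirical joint distribution (joint type) of a pair of sequences. -/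
noncomputable def empJoint {X Y : Type*} [DecidableEq X] [DecidableEq Y] {n : ℕ}
    (x : Fin n → X) (y : Fin n → Y) (ab : X × Y) : ℝ :=
  ((Finset.univ.filter fun i => x i = ab.1 ∧ y i = ab.2).card : ℝ) / n

/-- Shannon entropy, base 2. -/
noncomputable def ent2 {Z : Type*} [Fintype Z] (p : Z → ℝ) : ℝ :=
  ∑ z, -(p z * Real.logb 2 (p z))

/-- Empirical mutual information of a pair of sequences. -/
noncomputable def empMI {X Y : Type*} [Fintype X] [Fintype Y] [DecidableEq X] [DecidableEq Y]
    {n : ℕ} (x : Fin n → X) (y : Fin n → Y) : ℝ :=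
  ent2 (empDist x) + ent2 (empDist y) - ent2 (empJoint x y)

/-- The type class of an `n`-type `P`. -/
noncomputable def typeClass {X : Type*} [Fintype X] [DecidableEq X] (n : ℕ) (P : X → ℝ) :
    Finset (Fin n → X) :=
  Finset.univ.filter fun x => ∀ a, empDist x a = P a


set_option linter.unusedSectionVars false
set_option linter.unusedVariables false
set_option maxHeartbeats 1000000

section Aux

variable {X Y : Type*} [Fintype X] [Fintype Y] [DecidableEq X] [DecidableEq Y] {n : ℕ}

def cnt (x : Fin n → X) (a : X) : ℕ := (univ.filter fun i => x i = a).card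

def jcnt (x : Fin n → X) (y : Fin n → Y) (ab : X × Y) : ℕ :=
  (univ.filter fun i => x i = ab.1 ∧ y i = ab.2).card

lemma sum_cnt (x : Fin n → X) : ∑ a, cnt x a = n := by
  have := Finset.card_eq_sum_card_fiberwise (f := x) (s := univ) (t := univ)
    (fun i _ => mem_univ (x i))
  simpa [cnt, Finset.card_univ] using this.symm

lemma cnt_le (x : Fin n → X) (a : X) : cnt x a ≤ n := by
  simpa [cnt] using Finset.card_filter_le (univ : Finset (Fin n)) _

lemma jcnt_le_cnt (x : Fin n → X) (y : Fin n → Y) (ab : X × Y) :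
    jcnt x y ab ≤ cnt y ab.2 := by
  apply Finset.card_le_card
  intro i hi
  simp only [jcnt, mem_filter] at hi ⊢
  exact ⟨hi.1, hi.2.2⟩

lemma jcnt_le (x : Fin n → X) (y : Fin n → Y) (ab : X × Y) : jcnt x y ab ≤ n := by
  simpa [jcnt] using Finset.card_filter_le (univ : Finset (Fin n)) _

lemma sum_jcnt (x : Fin n → X) (y : Fin n → Y) (b : Y) :
    ∑ a, jcnt x y (a, b) = cnt y b := by
  have := Finset.card_eq_sum_card_fiberwise (f := x) (s := univ.filter fun i => y i = b)
    (t := univ) (fun i _ => mem_univ (x i))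
  rw [cnt, this]
  refine Finset.sum_congr rfl fun a _ => ?_
  rw [Finset.filter_filter, jcnt]
  congr 1
  ext i
  simp [and_comm]

lemma sum_jcnt_total (x : Fin n → X) (y : Fin n → Y) : ∑ ab : X × Y, jcnt x y ab = n := by
  rw [Fintype.sum_prod_type_right]
  rw [show ∑ b, ∑ a, jcnt x y (a, b) = ∑ b, cnt y b from
    Finset.sum_congr rfl fun b _ => sum_jcnt x y b]
  exact sum_cnt y

lemma prod_pow_cnt {M : Type*} [CommMonoid M] (x : Fin n → X) (f : X → M) :
    ∏ i, f (x i) = ∏ a, f a ^ cnt x a := by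
  rw [← Finset.prod_fiberwise_of_maps_to (g := x) (t := univ)
    (fun i _ => mem_univ (x i)) (fun i => f (x i))]
  refine Finset.prod_congr rfl fun a _ => ?_
  rw [Finset.prod_congr rfl (fun i hi => by rw [(mem_filter.mp hi).2] : ∀ i ∈ univ.filter fun i => x i = a, f (x i) = f a),
    Finset.prod_const, cnt]

lemma prod_pow_jcnt {M : Type*} [CommMonoid M] (x : Fin n → X) (y : Fin n → Y)
    (g : X × Y → M) : ∏ i, g (x i, y i) = ∏ ab, g ab ^ jcnt x y ab := by
  rw [← Finset.prod_fiberwise_of_maps_to (g := fun i => (x i, y i)) (t := univ)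
    (fun i _ => mem_univ _) (fun i => g (x i, y i))]
  refine Finset.prod_congr rfl fun ab _ => ?_
  rw [Finset.prod_congr rfl (fun i hi => by rw [(mem_filter.mp hi).2] : ∀ i ∈ univ.filter fun i => (x i, y i) = ab, g (x i, y i) = g ab),
    Finset.prod_const, jcnt]
  congr 1
  congr 1
  ext i
  simp [Prod.ext_iff]

lemma fact_le_fact_mul_pow (k d : ℕ) :
    (k + d).factorial ≤ k.factorial * (k + d) ^ d := by
  induction d with
  | zero => simp
  | succ d ih =>
    have h1 : (k + (d+1)).factorial = (k + d + 1) * (k + d).factorial := by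
      rw [show k + (d+1) = (k+d)+1 by ring, Nat.factorial_succ]
    rw [h1]
    calc (k + d + 1) * (k + d).factorial
        ≤ (k + d + 1) * (k.factorial * (k + d) ^ d) := Nat.mul_le_mul_left _ ih
      _ ≤ (k + d + 1) * (k.factorial * (k + d + 1) ^ d) := by
          exact Nat.mul_le_mul_left _ (Nat.mul_le_mul_left _ (Nat.pow_le_pow_left (Nat.le_succ _) d))
      _ = k.factorial * (k + (d+1)) ^ (d+1) := by ring
  
lemma factKey (k k' : ℕ) : k.factorial * k ^ k' ≤ k'.factorial * k ^ k := by
  rcases le_total k' k with h | h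
  · obtain ⟨d, rfl⟩ := Nat.exists_eq_add_of_le h
    calc (k' + d).factorial * (k' + d) ^ k'
        ≤ (k'.factorial * (k' + d) ^ d) * (k' + d) ^ k' :=
          Nat.mul_le_mul_right _ (fact_le_fact_mul_pow k' d)
      _ = k'.factorial * (k' + d) ^ (k' + d) := by rw [pow_add]; ring
  · obtain ⟨d, rfl⟩ := Nat.exists_eq_add_of_le h
    calc k.factorial * k ^ (k + d) = (k.factorial * k ^ d) * k ^ k := by rw [pow_add]; ring
      _ ≤ (k + d).factorial * k ^ k := by
          refine Nat.mul_le_mul_right _ (le_trans ?_ Nat.factorial_mul_pow_le_factorial)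
          exact Nat.mul_le_mul_left _ (Nat.pow_le_pow_left (Nat.le_succ _) d)

lemma cnt_comp_perm (x : Fin n → X) (σ : Equiv.Perm (Fin n)) (a : X) :
    cnt (x ∘ σ) a = cnt x a := by
  unfold cnt
  apply Finset.card_equiv σ
  intro i
  simp

lemma exists_comp_perm (x x₀ : Fin n → X) (h : ∀ a, cnt x a = cnt x₀ a) :
    ∃ σ : Equiv.Perm (Fin n), x = x₀ ∘ σ := by
  have e : ∀ a, {i // x i = a} ≃ {i // x₀ i = a} := fun a =>
    Fintype.equivOfCardEq (by
      rw [Fintype.card_subtype, Fintype.card_subtype]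
      exact h a)
  refine ⟨(Equiv.sigmaFiberEquiv x).symm.trans
    ((Equiv.sigmaCongrRight e).trans (Equiv.sigmaFiberEquiv x₀)), ?_⟩
  funext i
  have : (Equiv.sigmaFiberEquiv x).symm i = ⟨x i, ⟨i, rfl⟩⟩ := rfl
  simp only [Function.comp_apply, Equiv.trans_apply, this, Equiv.sigmaCongrRight_apply]
  exact ((e (x i)) ⟨i, rfl⟩).prop.symm

lemma card_typeclass_mul_fact (x₀ : Fin n → X) :
    (univ.filter fun x : Fin n → X => ∀ a, cnt x a = cnt x₀ a).card
      * ∏ a, (cnt x₀ a).factorial = n.factorial := by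
  classical
  have hcard := Finset.card_eq_sum_card_fiberwise
    (f := fun σ : Equiv.Perm (Fin n) => x₀ ∘ σ) (s := univ)
    (t := univ.filter fun x : Fin n → X => ∀ a, cnt x a = cnt x₀ a)
    (fun σ _ => by simp only [mem_coe, mem_filter, mem_univ, true_and];
                   exact fun a => cnt_comp_perm x₀ σ a)
  have h1 : (univ : Finset (Equiv.Perm (Fin n))).card = n.factorial := by
    simp [Finset.card_univ, Fintype.card_perm, Fintype.card_fin]
  have hstab : (univ.filter fun σ : Equiv.Perm (Fin n) => x₀ ∘ σ = x₀).card
      = ∏ a, (cnt x₀ a).factorial := by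
    have := DomMulAct.stabilizer_card (f := x₀)
    rw [Fintype.card_subtype] at this
    rw [this]
    refine Finset.prod_congr rfl fun a _ => ?_
    rw [Fintype.card_subtype]
    rfl
  have h2 : ∀ x ∈ (univ.filter fun x : Fin n → X => ∀ a, cnt x a = cnt x₀ a),
      (univ.filter fun σ : Equiv.Perm (Fin n) => x₀ ∘ σ = x).card
        = ∏ a, (cnt x₀ a).factorial := by
    intro x hx
    have hx' : ∀ a, cnt x a = cnt x₀ a := by
      simpa only [mem_filter, mem_univ, true_and] using hx
    obtain ⟨σx, rfl⟩ := exists_comp_perm x x₀ hx'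
    rw [← hstab]
    apply Finset.card_equiv (Equiv.mulRight σx⁻¹)
    intro σ
    simp only [mem_filter, mem_univ, true_and, Equiv.coe_mulRight]
    constructor
    · intro hσ
      funext i
      have := congrFun hσ (σx⁻¹ i)
      simpa [Function.comp] using this
    · intro hσ
      funext i
      have := congrFun hσ (σx i)
      simpa [Function.comp] using this
  rw [h1] at hcard
  rw [Finset.sum_congr rfl h2] at hcard
  rw [Finset.sum_const, smul_eq_mul] at hcard
  exact hcard.symm

lemma typeclass_count_compare (x₀ x' : Fin n → X) :
    (univ.filter fun x : Fin n → X => ∀ a, cnt x a = cnt x' a).card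
        * ∏ a, (cnt x₀ a) ^ (cnt x' a)
      ≤ (univ.filter fun x : Fin n → X => ∀ a, cnt x a = cnt x₀ a).card
        * ∏ a, (cnt x₀ a) ^ (cnt x₀ a) := by
  have hA := card_typeclass_mul_fact x₀
  have hA' := card_typeclass_mul_fact x'
  set t := (univ.filter fun x : Fin n → X => ∀ a, cnt x a = cnt x₀ a).card
  set t' := (univ.filter fun x : Fin n → X => ∀ a, cnt x a = cnt x' a).card
  have hpos : 0 < (∏ a, (cnt x' a).factorial) * ∏ a, (cnt x₀ a).factorial := by
    apply Nat.mul_pos <;> exact Finset.prod_pos fun a _ => Nat.factorial_pos _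
  apply Nat.le_of_mul_le_mul_right _ hpos
  calc t' * (∏ a, (cnt x₀ a) ^ (cnt x' a))
        * ((∏ a, (cnt x' a).factorial) * ∏ a, (cnt x₀ a).factorial)
      = (t' * ∏ a, (cnt x' a).factorial)
        * ((∏ a, (cnt x₀ a).factorial) * ∏ a, (cnt x₀ a) ^ (cnt x' a)) := by ring
    _ = n.factorial * ∏ a, ((cnt x₀ a).factorial * (cnt x₀ a) ^ (cnt x' a)) := by
        rw [hA', ← Finset.prod_mul_distrib]
    _ ≤ n.factorial * ∏ a, ((cnt x' a).factorial * (cnt x₀ a) ^ (cnt x₀ a)) := by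
        exact Nat.mul_le_mul le_rfl (Finset.prod_le_prod' fun a _ => factKey _ _)
    _ = (t * ∏ a, (cnt x₀ a).factorial)
        * ((∏ a, (cnt x' a).factorial) * ∏ a, (cnt x₀ a) ^ (cnt x₀ a)) := by
        rw [hA, ← Finset.prod_mul_distrib]
    _ = t * (∏ a, (cnt x₀ a) ^ (cnt x₀ a))
        * ((∏ a, (cnt x' a).factorial) * ∏ a, (cnt x₀ a).factorial) := by ring

lemma prod_q_pow (hn : 0 < n) (x₀ : Fin n → X) (m : X → ℕ) (hm : ∑ a, m a = n) :
    ∏ a, ((cnt x₀ a : ℝ) / n) ^ m a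
      = (∏ a, (cnt x₀ a : ℝ) ^ m a) / (n : ℝ) ^ n := by
  rw [show ((n:ℝ)) ^ n = ∏ a, (n:ℝ) ^ m a by rw [Finset.prod_pow_eq_pow_sum, hm],
    ← Finset.prod_div_distrib]
  exact Finset.prod_congr rfl fun a _ => div_pow _ _ _

lemma fiber_le (hn : 0 < n) (x₀ x' : Fin n → X) :
    ((univ.filter fun x : Fin n → X => ∀ a, cnt x a = cnt x' a).card : ℝ)
      * ∏ a, ((cnt x₀ a : ℝ) / n) ^ (cnt x' a)
    ≤ ((univ.filter fun x : Fin n → X => ∀ a, cnt x a = cnt x₀ a).card : ℝ)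
      * ∏ a, ((cnt x₀ a : ℝ) / n) ^ (cnt x₀ a) := by
  rw [prod_q_pow hn x₀ _ (sum_cnt x'), prod_q_pow hn x₀ _ (sum_cnt x₀),
    mul_div_assoc', mul_div_assoc']
  have hnn : (0:ℝ) < (n : ℝ) ^ n := by positivity
  rw [div_le_div_iff₀ hnn hnn]
  exact mul_le_mul_of_nonneg_right (by exact_mod_cast typeclass_count_compare x₀ x') hnn.le

lemma one_le_typeclass_bound (hn : 0 < n) (x₀ : Fin n → X) :
    1 ≤ ((n : ℝ) + 1) ^ (Fintype.card X)
        * (((univ.filter fun x : Fin n → X => ∀ a, cnt x a = cnt x₀ a).card : ℝ)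
        * ∏ a, ((cnt x₀ a : ℝ) / n) ^ (cnt x₀ a)) := by
  classical
  have hq1 : ∑ a, ((cnt x₀ a : ℝ) / n) = 1 := by
    rw [← Finset.sum_div]
    rw [show (∑ a, ((cnt x₀ a : ℝ))) = (n : ℝ) by exact_mod_cast congrArg Nat.cast (sum_cnt x₀)]
    exact div_self (by positivity)
  set tP : ℝ := ((univ.filter fun x : Fin n → X => ∀ a, cnt x a = cnt x₀ a).card : ℝ)
        * ∏ a, ((cnt x₀ a : ℝ) / n) ^ (cnt x₀ a) with htP
  have key : (1:ℝ) = ∑ x : Fin n → X, ∏ i, ((cnt x₀ (x i) : ℝ)/n) := by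
    have h := Finset.prod_univ_sum (fun _ : Fin n => (univ : Finset X))
      (fun _ a => ((cnt x₀ a : ℝ)/n))
    rw [Fintype.piFinset_univ] at h
    rw [← h]
    simp [hq1]
  set cntF : (Fin n → X) → (X → Fin (n+1)) :=
    fun x a => ⟨cnt x a, Nat.lt_succ_of_le (cnt_le x a)⟩ with hcntF
  have hdec : ∑ x : Fin n → X, ∏ i, ((cnt x₀ (x i) : ℝ)/n)
      = ∑ k' : X → Fin (n+1), ∑ x ∈ univ.filter (fun x => cntF x = k'),
          ∏ i, ((cnt x₀ (x i) : ℝ)/n) :=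
    (Finset.sum_fiberwise_of_maps_to (fun x _ => mem_univ _) _).symm
  have hfib : ∀ k' : X → Fin (n+1),
      ∑ x ∈ univ.filter (fun x => cntF x = k'), ∏ i, ((cnt x₀ (x i):ℝ)/n) ≤ tP := by
    intro k'
    have htPnn : 0 ≤ tP := by
      rw [htP]; apply mul_nonneg (Nat.cast_nonneg _)
      exact Finset.prod_nonneg fun a _ => pow_nonneg (by positivity) _
    rcases (univ.filter fun x => cntF x = k').eq_empty_or_nonempty with he | ⟨x', hx'⟩
    · rw [he, Finset.sum_empty]; exact htPnn
    · have hx'c : cntF x' = k' := (mem_filter.mp hx').2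
      have hcnteq : ∀ x, cntF x = k' → ∀ a, cnt x a = cnt x' a := by
        intro x hx a
        have h1 : cntF x a = cntF x' a := by rw [hx, hx'c]
        exact congrArg Fin.val h1
      have hconst : ∀ x ∈ univ.filter (fun x => cntF x = k'),
          ∏ i, ((cnt x₀ (x i):ℝ)/n) = ∏ a, ((cnt x₀ a : ℝ)/n) ^ (cnt x' a) := by
        intro x hx
        rw [prod_pow_cnt x (fun a => (cnt x₀ a:ℝ)/n)]
        exact Finset.prod_congr rfl fun a _ => by
          rw [hcnteq x (mem_filter.mp hx).2 a]
      rw [Finset.sum_congr rfl hconst, Finset.sum_const, nsmul_eq_mul]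
      have hsub : (univ.filter fun x => cntF x = k')
          ⊆ (univ.filter fun x : Fin n → X => ∀ a, cnt x a = cnt x' a) := by
        intro x hx
        simp only [mem_filter, mem_univ, true_and] at hx ⊢
        exact hcnteq x hx
      calc ((univ.filter fun x => cntF x = k').card : ℝ)
            * ∏ a, ((cnt x₀ a : ℝ)/n) ^ (cnt x' a)
          ≤ ((univ.filter fun x : Fin n → X => ∀ a, cnt x a = cnt x' a).card : ℝ)
            * ∏ a, ((cnt x₀ a : ℝ)/n) ^ (cnt x' a) := by
            apply mul_le_mul_of_nonneg_right
            · exact_mod_cast Finset.card_le_card hsub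
            · exact Finset.prod_nonneg fun a _ => pow_nonneg (by positivity) _
        _ ≤ tP := fiber_le hn x₀ x'
  calc (1:ℝ) = ∑ k' : X → Fin (n+1), ∑ x ∈ univ.filter (fun x => cntF x = k'),
          ∏ i, ((cnt x₀ (x i) : ℝ)/n) := by rw [← hdec, ← key]
    _ ≤ ∑ _k' : X → Fin (n+1), tP := Finset.sum_le_sum fun k' _ => hfib k'
    _ = (Fintype.card (X → Fin (n+1)) : ℝ) * tP := by
        rw [Finset.sum_const, nsmul_eq_mul, Finset.card_univ]
    _ = ((n : ℝ) + 1) ^ (Fintype.card X) * tP := by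
        rw [Fintype.card_fun, Fintype.card_fin]
        push_cast
        ring

lemma two_rpow_sum {ι : Type*} (s : Finset ι) (f : ι → ℝ) :
    (2:ℝ) ^ (∑ i ∈ s, f i) = ∏ i ∈ s, (2:ℝ) ^ (f i) := by
  induction s using Finset.cons_induction with
  | empty => simp
  | cons a s ha ih => rw [Finset.sum_cons, Finset.prod_cons, Real.rpow_add two_pos, ih]

lemma two_rpow_neg_ent2 {Z : Type*} [Fintype Z] (hn : 0 < n) (m : Z → ℕ) :
    (2:ℝ) ^ (-(n:ℝ) * ent2 (fun z => (m z : ℝ)/n)) = ∏ z, ((m z : ℝ)/n) ^ (m z) := by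
  have hnne : (n:ℝ) ≠ 0 := by positivity
  have hexp : -(n:ℝ) * ent2 (fun z => (m z : ℝ)/n)
      = ∑ z, (m z : ℝ) * Real.logb 2 ((m z : ℝ)/n) := by
    rw [ent2, Finset.mul_sum]
    refine Finset.sum_congr rfl fun z _ => ?_
    field_simp
  rw [hexp, two_rpow_sum]
  refine Finset.prod_congr rfl fun z _ => ?_
  rcases Nat.eq_zero_or_pos (m z) with h0 | hpos
  · simp [h0]
  · have hq : (0:ℝ) < (m z : ℝ)/n := by positivity
    rw [mul_comm ((m z : ℝ)), Real.rpow_mul (by norm_num : (0:ℝ) ≤ 2),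
      Real.rpow_logb two_pos (by norm_num) hq, Real.rpow_natCast]

lemma cond_count_le (hn : 0 < n) (y : Fin n → Y) (xh : Fin n → X) :
    ((univ.filter fun xb : Fin n → X => ∀ ab, jcnt xb y ab = jcnt xh y ab).card : ℝ)
      * ∏ ab : X × Y, ((jcnt xh y ab : ℝ) / (cnt y ab.2)) ^ (jcnt xh y ab) ≤ 1 := by
  set g : X × Y → ℝ := fun ab => (jcnt xh y ab : ℝ) / (cnt y ab.2) with hg
  have hg0 : ∀ ab, 0 ≤ g ab := fun ab => by rw [hg]; positivity
  have hrow : ∀ i, ∑ a, g (a, y i) = 1 := by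
    intro i
    have hm : 0 < cnt y (y i) := Finset.card_pos.mpr ⟨i, by simp [cnt]⟩
    rw [hg]
    simp only
    rw [← Finset.sum_div,
      show (∑ a, (jcnt xh y (a, y i) : ℝ)) = ((cnt y (y i) : ℕ) : ℝ) by
        exact_mod_cast congrArg Nat.cast (sum_jcnt xh y (y i))]
    exact div_self (by positivity)
  have key : (1:ℝ) = ∑ xb : Fin n → X, ∏ i, g (xb i, y i) := by
    have h := Finset.prod_univ_sum (fun _ : Fin n => (univ : Finset X)) (fun i a => g (a, y i))
    rw [Fintype.piFinset_univ] at h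
    rw [← h]
    simp only [hrow]
    simp
  have hconst : ∀ xb ∈ univ.filter (fun xb : Fin n → X => ∀ ab, jcnt xb y ab = jcnt xh y ab),
      ∏ i, g (xb i, y i) = ∏ ab, g ab ^ jcnt xh y ab := by
    intro xb hxb
    rw [prod_pow_jcnt xb y g]
    exact Finset.prod_congr rfl fun ab _ => by rw [(mem_filter.mp hxb).2 ab]
  have hsum : ((univ.filter fun xb : Fin n → X =>
        ∀ ab, jcnt xb y ab = jcnt xh y ab).card : ℝ) * ∏ ab, g ab ^ jcnt xh y ab
      = ∑ xb ∈ univ.filter (fun xb : Fin n → X => ∀ ab, jcnt xb y ab = jcnt xh y ab),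
          ∏ i, g (xb i, y i) := by
    rw [Finset.sum_congr rfl hconst, Finset.sum_const, nsmul_eq_mul]
  rw [hsum, key]
  exact Finset.sum_le_sum_of_subset_of_nonneg (Finset.filter_subset _ _)
    (fun xb _ _ => Finset.prod_nonneg fun i _ => hg0 _)

lemma bridge (hn : 0 < n) (y : Fin n → Y) (xh : Fin n → X) :
    (∏ ab : X × Y, ((jcnt xh y ab : ℝ) / (cnt y ab.2)) ^ (jcnt xh y ab))
      * ∏ b, ((cnt y b : ℝ) / n) ^ (cnt y b)
    = ∏ ab : X × Y, ((jcnt xh y ab : ℝ) / n) ^ (jcnt xh y ab) := by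
  have hB : ∏ b, ((cnt y b : ℝ) / n) ^ (cnt y b)
      = ∏ ab : X × Y, ((cnt y ab.2 : ℝ) / n) ^ (jcnt xh y ab) := by
    rw [Fintype.prod_prod_type_right]
    refine Finset.prod_congr rfl fun b _ => ?_
    have h := Finset.prod_pow_eq_pow_sum (univ : Finset X)
      (fun a => jcnt xh y (a, b)) (((cnt y b : ℝ))/n)
    rw [sum_jcnt xh y b] at h
    rw [← h]
  rw [hB, ← Finset.prod_mul_distrib]
  refine Finset.prod_congr rfl fun ab _ => ?_
  rw [← mul_pow]
  rcases Nat.eq_zero_or_pos (jcnt xh y ab) with h0 | hpos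
  · simp [h0]
  · have hm : 0 < cnt y ab.2 := lt_of_lt_of_le hpos (jcnt_le_cnt xh y ab)
    congr 1
    have h1 : (cnt y ab.2 : ℝ) ≠ 0 := by positivity
    have h2 : (n : ℝ) ≠ 0 := by positivity
    field_simp

lemma fiber_bound (hn : 0 < n) (y : Fin n → Y) (xh : Fin n → X) :
    ((univ.filter fun xb : Fin n → X => ∀ ab, jcnt xb y ab = jcnt xh y ab).card : ℝ)
      * (2:ℝ) ^ ((n:ℝ) * empMI xh y)
    ≤ ((n:ℝ)+1) ^ (Fintype.card X)
      * ((univ.filter fun x : Fin n → X => ∀ a, cnt x a = cnt xh a).card : ℝ) := by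
  set A := ∏ a, ((cnt xh a : ℝ)/n) ^ (cnt xh a) with hA
  set B := ∏ b, ((cnt y b : ℝ)/n) ^ (cnt y b) with hB
  set Cp := ∏ ab : X × Y, ((jcnt xh y ab : ℝ)/n) ^ (jcnt xh y ab) with hC
  have hA' : (2:ℝ) ^ (-(n:ℝ) * ent2 (empDist xh)) = A := by
    rw [show empDist xh = fun a => ((cnt xh a : ℝ)/n) from rfl]
    exact two_rpow_neg_ent2 hn _
  have hB' : (2:ℝ) ^ (-(n:ℝ) * ent2 (empDist y)) = B := by
    rw [show empDist y = fun b => ((cnt y b : ℝ)/n) from rfl]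
    exact two_rpow_neg_ent2 hn _
  have hC' : (2:ℝ) ^ (-(n:ℝ) * ent2 (empJoint xh y)) = Cp := by
    rw [show empJoint xh y = fun ab => ((jcnt xh y ab : ℝ)/n) from rfl]
    exact two_rpow_neg_ent2 hn _
  have hApos : 0 < A := by rw [← hA']; positivity
  have hBpos : 0 < B := by rw [← hB']; positivity
  have hkey : (2:ℝ) ^ ((n:ℝ) * empMI xh y) * (A * B) = Cp := by
    rw [← hA', ← hB', ← hC', ← Real.rpow_add two_pos, ← Real.rpow_add two_pos]
    congr 1
    rw [empMI]
    ring
  have hABpos : 0 < A * B := mul_pos hApos hBpos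
  rw [← mul_le_mul_iff_of_pos_right hABpos]
  have hL : ((univ.filter fun xb : Fin n → X => ∀ ab, jcnt xb y ab = jcnt xh y ab).card : ℝ)
      * (2:ℝ) ^ ((n:ℝ) * empMI xh y) * (A * B)
      = (((univ.filter fun xb : Fin n → X => ∀ ab, jcnt xb y ab = jcnt xh y ab).card : ℝ)
        * ∏ ab : X × Y, ((jcnt xh y ab : ℝ) / (cnt y ab.2)) ^ (jcnt xh y ab)) * B := by
    rw [mul_assoc, hkey, hC, ← bridge hn y xh]
    ring
  calc ((univ.filter fun xb : Fin n → X => ∀ ab, jcnt xb y ab = jcnt xh y ab).card : ℝ)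
      * (2:ℝ) ^ ((n:ℝ) * empMI xh y) * (A * B)
      ≤ 1 * B := by
        rw [hL]
        exact mul_le_mul_of_nonneg_right (cond_count_le hn y xh) hBpos.le
    _ ≤ (((n:ℝ)+1) ^ (Fintype.card X)
          * (((univ.filter fun x : Fin n → X => ∀ a, cnt x a = cnt xh a).card : ℝ) * A)) * B := by
        exact mul_le_mul_of_nonneg_right (one_le_typeclass_bound hn xh) hBpos.le
    _ = ((n:ℝ)+1) ^ (Fintype.card X)
          * ((univ.filter fun x : Fin n → X => ∀ a, cnt x a = cnt xh a).card : ℝ) * (A * B) := by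
        ring

lemma typeClass_eq_cnt (hn : 0 < n) (P : X → ℝ) (x₀ : Fin n → X) (hx₀ : x₀ ∈ typeClass n P) :
    typeClass n P = univ.filter fun x : Fin n → X => ∀ a, cnt x a = cnt x₀ a := by
  have hP : ∀ a, empDist x₀ a = P a := by
    simpa [typeClass] using hx₀
  ext x
  simp only [typeClass, mem_filter, mem_univ, true_and]
  refine forall_congr' fun a => ?_
  rw [← hP a]
  unfold empDist
  rw [div_eq_div_iff (by positivity) (by positivity)]
  constructor
  · intro h
    have := mul_right_cancel₀ (b := (n:ℝ)) (by positivity) h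
    exact_mod_cast this
  · intro h
    rw [show ((univ.filter fun i => x i = a).card : ℝ)
      = ((univ.filter fun i => x₀ i = a).card : ℝ) from by exact_mod_cast h]

lemma sumN_le (hn : 0 < n) (x₀ : Fin n → X) (y : Fin n → Y) (γ : ℝ) (hγ : 0 < γ) :
    ∑ xb ∈ univ.filter (fun x : Fin n → X => ∀ a, cnt x a = cnt x₀ a),
        (if γ < empMI xb y then (1:ℝ) else 0)
      ≤ ((n:ℝ)+1) ^ (Fintype.card X + Fintype.card X * Fintype.card Y)
        * (2:ℝ) ^ (-(n:ℝ) * γ)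
        * ((univ.filter (fun x : Fin n → X => ∀ a, cnt x a = cnt x₀ a)).card : ℝ) := by
  classical
  set T := univ.filter (fun x : Fin n → X => ∀ a, cnt x a = cnt x₀ a) with hTdef
  have hind : ∀ xb : Fin n → X, (if γ < empMI xb y then (1:ℝ) else 0)
      ≤ (2:ℝ) ^ (-(n:ℝ)*γ) * (2:ℝ) ^ ((n:ℝ) * empMI xb y) := by
    intro xb
    rw [← Real.rpow_add two_pos]
    split_ifs with h
    · rw [show (1:ℝ) = (2:ℝ) ^ (0:ℝ) from (Real.rpow_zero 2).symm]
      apply Real.rpow_le_rpow_of_exponent_le one_le_two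
      have hn' : (0:ℝ) < n := by positivity
      nlinarith
    · positivity
  calc ∑ xb ∈ T, (if γ < empMI xb y then (1:ℝ) else 0)
      ≤ ∑ xb ∈ T, (2:ℝ) ^ (-(n:ℝ)*γ) * (2:ℝ) ^ ((n:ℝ) * empMI xb y) :=
        Finset.sum_le_sum fun xb _ => hind xb
    _ = (2:ℝ) ^ (-(n:ℝ)*γ) * ∑ xb ∈ T, (2:ℝ) ^ ((n:ℝ) * empMI xb y) := by
        rw [Finset.mul_sum]
    _ ≤ (2:ℝ) ^ (-(n:ℝ)*γ)
        * (((n:ℝ)+1) ^ (Fintype.card X * Fintype.card Y)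
          * (((n:ℝ)+1) ^ (Fintype.card X) * (T.card : ℝ))) := ?_
    _ = ((n:ℝ)+1) ^ (Fintype.card X + Fintype.card X * Fintype.card Y)
        * (2:ℝ) ^ (-(n:ℝ) * γ) * (T.card : ℝ) := by
        rw [pow_add]
        ring
  refine mul_le_mul_of_nonneg_left ?_ (by positivity)
  -- fiber decomposition over joint counts
  set jF : (Fin n → X) → (X × Y → Fin (n+1)) :=
    fun xb ab => ⟨jcnt xb y ab, Nat.lt_succ_of_le (jcnt_le xb y ab)⟩ with hjF
  have hdec : ∑ xb ∈ T, (2:ℝ) ^ ((n:ℝ) * empMI xb y)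
      = ∑ c : X × Y → Fin (n+1), ∑ xb ∈ T.filter (fun xb => jF xb = c),
          (2:ℝ) ^ ((n:ℝ) * empMI xb y) :=
    (Finset.sum_fiberwise_of_maps_to (fun xb _ => mem_univ _) _).symm
  have hfib : ∀ c : X × Y → Fin (n+1),
      ∑ xb ∈ T.filter (fun xb => jF xb = c), (2:ℝ) ^ ((n:ℝ) * empMI xb y)
        ≤ ((n:ℝ)+1) ^ (Fintype.card X) * (T.card : ℝ) := by
    intro c
    rcases (T.filter (fun xb => jF xb = c)).eq_empty_or_nonempty with he | ⟨xh, hxh⟩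
    · rw [he, Finset.sum_empty]; positivity
    · have hxhT : xh ∈ T := (mem_filter.mp hxh).1
      have hxhc : jF xh = c := (mem_filter.mp hxh).2
      have hxhcnt : ∀ a, cnt xh a = cnt x₀ a := by
        simpa [hTdef] using hxhT
      have hsame : ∀ xb ∈ T.filter (fun xb => jF xb = c), empMI xb y = empMI xh y := by
        intro xb hxb
        have h1 : ∀ a, cnt xb a = cnt xh a := by
          have := (mem_filter.mp (mem_filter.mp hxb).1).2
          intro a; rw [this a, hxhcnt a]
        have h2 : ∀ ab, jcnt xb y ab = jcnt xh y ab := by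
          intro ab
          have : jF xb ab = jF xh ab := by rw [(mem_filter.mp hxb).2, hxhc]
          exact congrArg Fin.val this
        have e1 : empDist xb = empDist xh := by
          funext a; unfold empDist; rw [show (univ.filter fun i => xb i = a).card
            = (univ.filter fun i => xh i = a).card from h1 a]
        have e2 : empJoint xb y = empJoint xh y := by
          funext ab; unfold empJoint; rw [show (univ.filter fun i => xb i = ab.1 ∧ y i = ab.2).card
            = (univ.filter fun i => xh i = ab.1 ∧ y i = ab.2).card from h2 ab]
        rw [empMI, empMI, e1, e2]
      rw [Finset.sum_congr rfl (fun xb hxb => by rw [hsame xb hxb]), Finset.sum_const,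
        nsmul_eq_mul]
      have hsub : T.filter (fun xb => jF xb = c)
          ⊆ univ.filter fun xb : Fin n → X => ∀ ab, jcnt xb y ab = jcnt xh y ab := by
        intro xb hxb
        simp only [mem_filter, mem_univ, true_and]
        intro ab
        have : jF xb ab = jF xh ab := by rw [(mem_filter.mp hxb).2, hxhc]
        exact congrArg Fin.val this
      have hTeq : T = univ.filter fun x : Fin n → X => ∀ a, cnt x a = cnt xh a := by
        rw [hTdef]
        ext x
        simp only [mem_filter, mem_univ, true_and]
        exact forall_congr' fun a => by rw [hxhcnt a]
      calc ((T.filter (fun xb => jF xb = c)).card : ℝ) * (2:ℝ) ^ ((n:ℝ) * empMI xh y)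
          ≤ ((univ.filter fun xb : Fin n → X =>
              ∀ ab, jcnt xb y ab = jcnt xh y ab).card : ℝ)
            * (2:ℝ) ^ ((n:ℝ) * empMI xh y) := by
            apply mul_le_mul_of_nonneg_right ?_ (by positivity)
            exact_mod_cast Finset.card_le_card hsub
        _ ≤ ((n:ℝ)+1) ^ (Fintype.card X)
            * ((univ.filter fun x : Fin n → X => ∀ a, cnt x a = cnt xh a).card : ℝ) :=
            fiber_bound hn y xh
        _ = ((n:ℝ)+1) ^ (Fintype.card X) * (T.card : ℝ) := by rw [← hTeq]
  calc ∑ xb ∈ T, (2:ℝ) ^ ((n:ℝ) * empMI xb y)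
      = ∑ c : X × Y → Fin (n+1), ∑ xb ∈ T.filter (fun xb => jF xb = c),
          (2:ℝ) ^ ((n:ℝ) * empMI xb y) := hdec
    _ ≤ ∑ _c : X × Y → Fin (n+1), ((n:ℝ)+1) ^ (Fintype.card X) * (T.card : ℝ) :=
        Finset.sum_le_sum fun c _ => hfib c
    _ = (Fintype.card (X × Y → Fin (n+1)) : ℝ)
        * (((n:ℝ)+1) ^ (Fintype.card X) * (T.card : ℝ)) := by
        rw [Finset.sum_const, nsmul_eq_mul, Finset.card_univ]
    _ = ((n:ℝ)+1) ^ (Fintype.card X * Fintype.card Y)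
        * (((n:ℝ)+1) ^ (Fintype.card X) * (T.card : ℝ)) := by
        rw [Fintype.card_fun, Fintype.card_fin, Fintype.card_prod]
        push_cast
        ring

lemma assemble (T : Finset (Fin n → X)) (hTne : T.Nonempty)
    (W : X → Y → ℝ) (hW0 : ∀ x y, 0 ≤ W x y) (hW1 : ∀ x, ∑ y, W x y = 1)
    (γ : ℝ) (E : ℝ) (hEnn : 0 ≤ E)
    (hNy : ∀ y : Fin n → Y,
      ∑ xb ∈ T, (if γ < empMI xb y then (1:ℝ) else 0) ≤ E * (T.card : ℝ)) :
    ∑ x ∈ T, ∑ xb ∈ T, ∑ y : Fin n → Y,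
        (1 / (T.card : ℝ)) * (1 / (T.card : ℝ)) *
          (∏ i, W (x i) (y i)) *
          (if γ < empMI xb y then 1 else 0)
      ≤ E := by
  classical
  set t : ℝ := (T.card : ℝ) with ht
  have htpos : 0 < t := by
    rw [ht]
    exact_mod_cast Finset.card_pos.mpr hTne
  have hWy : ∀ x : Fin n → X, ∑ y : Fin n → Y, ∏ i, W (x i) (y i) = 1 := by
    intro x
    have h := Finset.prod_univ_sum (fun _ : Fin n => (univ : Finset Y))
      (fun i b => W (x i) b)
    rw [Fintype.piFinset_univ] at h
    rw [← h]
    simp [hW1]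
  have hstep : ∀ x : Fin n → X, x ∈ T →
      ∑ xb ∈ T, ∑ y : Fin n → Y,
        (1 / t) * (1 / t) * (∏ i, W (x i) (y i)) * (if γ < empMI xb y then (1:ℝ) else 0)
      ≤ (1 / t) * (1 / t) * (E * t) := by
    intro x _
    rw [Finset.sum_comm]
    have h1 : ∀ y : Fin n → Y,
        ∑ xb ∈ T, (1 / t) * (1 / t) * (∏ i, W (x i) (y i)) * (if γ < empMI xb y then (1:ℝ) else 0)
        = (1 / t) * (1 / t) * (∏ i, W (x i) (y i))
          * ∑ xb ∈ T, (if γ < empMI xb y then (1:ℝ) else 0) := by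
      intro y
      rw [Finset.mul_sum]
    rw [Finset.sum_congr rfl fun y _ => h1 y]
    have h2 : ∀ y : Fin n → Y,
        (1 / t) * (1 / t) * (∏ i, W (x i) (y i))
          * ∑ xb ∈ T, (if γ < empMI xb y then (1:ℝ) else 0)
        ≤ (1 / t) * (1 / t) * (∏ i, W (x i) (y i)) * (E * t) := by
      intro y
      apply mul_le_mul_of_nonneg_left (hNy y)
      have : 0 ≤ ∏ i, W (x i) (y i) := Finset.prod_nonneg fun i _ => hW0 _ _
      positivity
    calc ∑ y : Fin n → Y, ((1 / t) * (1 / t) * (∏ i, W (x i) (y i))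
          * ∑ xb ∈ T, (if γ < empMI xb y then (1:ℝ) else 0))
        ≤ ∑ y : Fin n → Y, (1 / t) * (1 / t) * (∏ i, W (x i) (y i)) * (E * t) :=
          Finset.sum_le_sum fun y _ => h2 y
      _ = (1 / t) * (1 / t) * (E * t) * ∑ y : Fin n → Y, ∏ i, W (x i) (y i) := by
          rw [Finset.mul_sum]
          exact Finset.sum_congr rfl fun y _ => by ring
      _ = (1 / t) * (1 / t) * (E * t) := by rw [hWy x, mul_one]
  calc ∑ x ∈ T, ∑ xb ∈ T, ∑ y : Fin n → Y,
        (1 / t) * (1 / t) * (∏ i, W (x i) (y i)) * (if γ < empMI xb y then (1:ℝ) else 0)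
      ≤ ∑ _x ∈ T, (1 / t) * (1 / t) * (E * t) := Finset.sum_le_sum hstep
    _ = t * ((1 / t) * (1 / t) * (E * t)) := by
        rw [Finset.sum_const, nsmul_eq_mul, ht]
    _ = E := by field_simp


end Aux

/-- if `X` and `X̄` are independent and uniform on the type class of an
`n`-type `P`, and `Y` is the output of the memoryless channel `W` on input `X`, then
`Pr[Î(X̄ ∧ Y) > γ] ≤ (n+1)^(|X|+|X||Y|) · 2^(-nγ)`. -/
theorem stmt0 {X Y : Type*} [Fintype X] [Fintype Y] [DecidableEq X] [DecidableEq Y]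
    (n : ℕ) (hn : 0 < n) (P : X → ℝ)
    (hP0 : ∀ a, 0 ≤ P a) (hP1 : ∑ a, P a = 1)
    (hPtype : ∀ a, ∃ k : ℕ, P a = (k : ℝ) / n)
    (hT : (typeClass n P).Nonempty)
    (W : X → Y → ℝ) (hW0 : ∀ x y, 0 ≤ W x y) (hW1 : ∀ x, ∑ y, W x y = 1)
    (γ : ℝ) (hγ : 0 < γ) :
    ∑ x ∈ typeClass n P, ∑ xb ∈ typeClass n P, ∑ y : Fin n → Y,
        (1 / ((typeClass n P).card : ℝ)) * (1 / ((typeClass n P).card : ℝ)) *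
          (∏ i, W (x i) (y i)) *
          (if γ < empMI xb y then 1 else 0)
      ≤ ((n : ℝ) + 1) ^ (Fintype.card X + Fintype.card X * Fintype.card Y) *
          (2 : ℝ) ^ (-(n : ℝ) * γ) := by
  classical
  obtain ⟨x₀, hx₀⟩ := hT
  have hTeq := typeClass_eq_cnt hn P x₀ hx₀
  refine assemble (typeClass n P) ⟨x₀, hx₀⟩ W hW0 hW1 γ _ (by positivity) ?_
  intro y
  rw [hTeq]
  exact sumN_le hn x₀ y γ hγ
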